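/- Suppose the pair (X, Y) is supported on a finite set, where X takes values in a finite set 𝒳 = {x₁, …, x_m} and Y takes values in a set 𝒴, and let A = α(X). Let d : 𝒳 → [0,1], let U be uniform on [0,1] independent of (X, Y), and let D = 1{U ≤ d(X)}. Then D is conditionally independent of A given Y if and only if for every a ∈ 𝒜 and every y ∈ 𝒴 with Pr(A = a, Y = y) > 0, Σ_{i=1}^m d(x_i)·Pr(X = x_i | A = a, Y = y) = Σ_{i=1}^m d(x_i)·Pr(X = x_i | Y = y); in particular, the condition D ⫫ A | Y is equivalent to a finite system of constraints that are linear in the values d(x₁), …, d(x_m). -/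

import Mathlib

open MeasureTheory

/-- For finitely supported `(X, Y)` and decisions `D = 1{U ≤ d(X)}` with `U`
uniform and independent of `(X, Y)`, the conditional independence `D ⫫ A | Y` holds iff a
finite system of constraints, linear in the values `d(x)`, holds. -/
theorem counterfactual_equalized_odds_linear_constraints
    {Ω 𝒳 𝒴 𝒜 : Type*} [MeasurableSpace Ω]
    [Fintype 𝒳] [MeasurableSpace 𝒳] [MeasurableSingletonClass 𝒳]
    [Fintype 𝒴] [MeasurableSpace 𝒴] [MeasurableSingletonClass 𝒴]
    [Fintype 𝒜]
    (P : Measure Ω) [IsProbabilityMeasure P]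
    (X : Ω → 𝒳) (hX : Measurable X)
    (Y : Ω → 𝒴) (hY : Measurable Y)
    (α : 𝒳 → 𝒜)
    (U : Ω → ℝ) (hU : Measurable U)
    -- `U` is uniform on `[0,1]` and independent of `(X, Y)`
    (hUunif : Measure.map U P = volume.restrict (Set.Icc (0 : ℝ) 1))
    (hindep : ProbabilityTheory.IndepFun U (fun ω => (X ω, Y ω)) P)
    -- the decision policy
    (d : 𝒳 → ℝ) (hd01 : ∀ x, d x ∈ Set.Icc (0 : ℝ) 1) :
    -- `D ⫫ A | Y` (with `D = 1{U ≤ d(X)}`) iff the linear constraints hold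
    ((∀ (a : 𝒜) (y : 𝒴), 0 < P {ω | Y ω = y} →
        (P ({ω | U ω ≤ d (X ω)} ∩ {ω | α (X ω) = a} ∩ {ω | Y ω = y})).toReal
            / (P {ω | Y ω = y}).toReal
          = ((P ({ω | U ω ≤ d (X ω)} ∩ {ω | Y ω = y})).toReal
              / (P {ω | Y ω = y}).toReal)
            * ((P ({ω | α (X ω) = a} ∩ {ω | Y ω = y})).toReal
              / (P {ω | Y ω = y}).toReal)) ↔
      (∀ (a : 𝒜) (y : 𝒴), 0 < P ({ω | α (X ω) = a} ∩ {ω | Y ω = y}) →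
        ∑ x : 𝒳, d x *
            ((P ({ω | X ω = x} ∩ ({ω | α (X ω) = a} ∩ {ω | Y ω = y}))).toReal
              / (P ({ω | α (X ω) = a} ∩ {ω | Y ω = y})).toReal)
          = ∑ x : 𝒳, d x *
            ((P ({ω | X ω = x} ∩ {ω | Y ω = y})).toReal
              / (P {ω | Y ω = y}).toReal))) := by
  have hTop : ∀ s : Set Ω, P s ≠ ⊤ := fun s => (measure_lt_top P s).ne
  -- the distribution of U
  have hUc : ∀ c : ℝ, c ∈ Set.Icc (0:ℝ) 1 → P (U ⁻¹' Set.Iic c) = ENNReal.ofReal c := by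
    intro c hc
    rw [← Measure.map_apply hU measurableSet_Iic, hUunif,
        Measure.restrict_apply measurableSet_Iic]
    have he : Set.Iic c ∩ Set.Icc (0:ℝ) 1 = Set.Icc 0 c := by
      ext t
      simp only [Set.mem_inter_iff, Set.mem_Iic, Set.mem_Icc]
      constructor
      · rintro ⟨h1, h2, _⟩; exact ⟨h2, h1⟩
      · rintro ⟨h1, h2⟩; exact ⟨h2, h1, h2.trans hc.2⟩
    rw [he, Real.volume_Icc]
    simp
  -- key decomposition lemma
  have key : ∀ B : Set (𝒳 × 𝒴),
      (P ({ω | U ω ≤ d (X ω)} ∩ {ω | (X ω, Y ω) ∈ B})).toReal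
        = ∑ x : 𝒳, d x * (P ({ω | X ω = x} ∩ {ω | (X ω, Y ω) ∈ B})).toReal := by
    intro B
    have hdecomp : {ω | U ω ≤ d (X ω)} ∩ {ω | (X ω, Y ω) ∈ B}
        = ⋃ x : 𝒳, ({ω | X ω = x} ∩ ({ω | U ω ≤ d x} ∩ {ω | (X ω, Y ω) ∈ B})) := by
      ext ω
      simp only [Set.mem_inter_iff, Set.mem_iUnion, Set.mem_setOf_eq]
      constructor
      · rintro ⟨h1, h2⟩; exact ⟨X ω, rfl, h1, h2⟩
      · rintro ⟨x, hx, h1, h2⟩; subst hx; exact ⟨h1, h2⟩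
    have hmeas : ∀ x : 𝒳, MeasurableSet
        ({ω | X ω = x} ∩ ({ω | U ω ≤ d x} ∩ {ω | (X ω, Y ω) ∈ B})) := by
      intro x
      refine ((hX (MeasurableSet.singleton x)).inter ((hU measurableSet_Iic).inter ?_))
      exact (hX.prodMk hY) B.toFinite.measurableSet
    have hdisj : Pairwise (Function.onFun Disjoint
        (fun x : 𝒳 => {ω | X ω = x} ∩ ({ω | U ω ≤ d x} ∩ {ω | (X ω, Y ω) ∈ B}))) := by
      intro x x' hxx'
      refine Set.disjoint_left.2 ?_
      rintro ω ⟨h1, _⟩ ⟨h1', _⟩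
      exact hxx' (h1 ▸ h1')
    rw [hdecomp, measure_iUnion hdisj hmeas, tsum_fintype,
      ENNReal.toReal_sum (fun x _ => hTop _)]
    refine Finset.sum_congr rfl fun x _ => ?_
    have hterm : {ω | X ω = x} ∩ ({ω | U ω ≤ d x} ∩ {ω | (X ω, Y ω) ∈ B})
        = U ⁻¹' Set.Iic (d x) ∩ (fun ω => (X ω, Y ω)) ⁻¹' (({x} ×ˢ Set.univ) ∩ B) := by
      ext ω
      simp only [Set.mem_inter_iff, Set.mem_setOf_eq, Set.mem_preimage, Set.mem_Iic,
        Set.mem_prod, Set.mem_singleton_iff, Set.mem_univ, and_true]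
      tauto
    have hX' : {ω | X ω = x} ∩ {ω | (X ω, Y ω) ∈ B}
        = (fun ω => (X ω, Y ω)) ⁻¹' (({x} ×ˢ Set.univ) ∩ B) := by
      ext ω
      simp only [Set.mem_inter_iff, Set.mem_setOf_eq, Set.mem_preimage, Set.mem_prod,
        Set.mem_singleton_iff, Set.mem_univ, and_true]
    rw [hterm, hindep.measure_inter_preimage_eq_mul _ _ measurableSet_Iic
      (Set.toFinite _).measurableSet, hUc (d x) (hd01 x), ENNReal.toReal_mul,
      ENNReal.toReal_ofReal (hd01 x).1, hX']
  -- the two instantiations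
  have hNkey : ∀ (a : 𝒜) (y : 𝒴),
      (P ({ω | U ω ≤ d (X ω)} ∩ {ω | α (X ω) = a} ∩ {ω | Y ω = y})).toReal
        = ∑ x : 𝒳, d x *
            (P ({ω | X ω = x} ∩ ({ω | α (X ω) = a} ∩ {ω | Y ω = y}))).toReal := by
    intro a y
    have e1 : {ω | U ω ≤ d (X ω)} ∩ {ω | α (X ω) = a} ∩ {ω | Y ω = y}
        = {ω | U ω ≤ d (X ω)} ∩ {ω | (X ω, Y ω) ∈ {p : 𝒳 × 𝒴 | α p.1 = a ∧ p.2 = y}} := by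
      ext ω; simp only [Set.mem_inter_iff, Set.mem_setOf_eq]; tauto
    rw [e1, key]
    rfl
  have hMkey : ∀ (y : 𝒴),
      (P ({ω | U ω ≤ d (X ω)} ∩ {ω | Y ω = y})).toReal
        = ∑ x : 𝒳, d x * (P ({ω | X ω = x} ∩ {ω | Y ω = y})).toReal := by
    intro y
    have e1 : {ω | U ω ≤ d (X ω)} ∩ {ω | Y ω = y}
        = {ω | U ω ≤ d (X ω)} ∩ {ω | (X ω, Y ω) ∈ {p : 𝒳 × 𝒴 | p.2 = y}} := rfl
    rw [e1, key]
    rfl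
  -- rearranging the sums with divisions
  have hsumdiv : ∀ (c : ℝ) (f : 𝒳 → ℝ),
      ∑ x : 𝒳, d x * (f x / c) = (∑ x : 𝒳, d x * f x) / c := by
    intro c f
    rw [Finset.sum_div]
    exact Finset.sum_congr rfl fun x _ => (mul_div_assoc _ _ _).symm
  constructor
  · intro h a y hq
    have hsub : {ω | α (X ω) = a} ∩ {ω | Y ω = y} ⊆ {ω | Y ω = y} := Set.inter_subset_right
    have hpy : 0 < P {ω | Y ω = y} := lt_of_lt_of_le hq (measure_mono hsub)
    have h1 := h a y hpy
    have hp : (0:ℝ) < (P {ω | Y ω = y}).toReal := ENNReal.toReal_pos hpy.ne' (hTop _)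
    have hq' : (0:ℝ) < (P ({ω | α (X ω) = a} ∩ {ω | Y ω = y})).toReal :=
      ENNReal.toReal_pos hq.ne' (hTop _)
    rw [hsumdiv, hsumdiv, ← hNkey a y, ← hMkey y]
    rw [div_eq_div_iff hq'.ne' hp.ne']
    field_simp at h1
    apply mul_right_cancel₀ hp.ne'
    linear_combination (P {ω | Y ω = y}).toReal * h1
  · intro h a y hpy
    have hp : (0:ℝ) < (P {ω | Y ω = y}).toReal := ENNReal.toReal_pos hpy.ne' (hTop _)
    rcases eq_or_lt_of_le (zero_le : (0:ENNReal) ≤ P ({ω | α (X ω) = a} ∩ {ω | Y ω = y})) with hq | hq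
    · -- P(A ∩ Y) = 0
      have hzero : P ({ω | U ω ≤ d (X ω)} ∩ {ω | α (X ω) = a} ∩ {ω | Y ω = y}) = 0 := by
        refine measure_mono_null ?_ hq.symm
        rintro ω ⟨⟨_, h2⟩, h3⟩; exact ⟨h2, h3⟩
      rw [hzero, ← hq]
      simp
    · have h1 := h a y hq
      rw [hsumdiv, hsumdiv, ← hNkey a y, ← hMkey y] at h1
      have hq' : (0:ℝ) < (P ({ω | α (X ω) = a} ∩ {ω | Y ω = y})).toReal :=
        ENNReal.toReal_pos hq.ne' (hTop _)
      rw [div_eq_div_iff hq'.ne' hp.ne'] at h1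
      field_simp
      linear_combination h1
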